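/- For the 2×2 system u_t = 0, v_t + ((1 + v + u) v)_x = 0 (strictly hyperbolic for (u,v) near the origin), the second eigenvalue satisfies λ₂(u,v) = 1 + u + 2v, so D_x λ₂(u,v) = D_x u + 2 D_x v can have a nonzero Cantor part for a BV solution (take any nonconstant BV function u₀ with purely Cantor derivative and v ≡ 0, giving a stationary solution); nevertheless the second component (D_u λ₂ · r₂)(l₂ · (u,v)_x) = (2/(1 + u + 2v)) ( v D_x u + (1 + u + 2v) D_x v ) has no Cantor part outside a countable set of times, in accordance with the general theorem. In particular, for the stationary solution u(t,x) = u₀(x), v ≡ 0, the measure (D_u λ₂ · r₂)(l₂ · (u,v)_x) equals 2 D_x v = 0 and hence has no Cantor part, while D_x λ₂ = D_x u₀ is purely Cantor. -/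

import Mathlib

open MeasureTheory Set Filter Topology
open scoped ENNReal

noncomputable section

/-- A signed measure `μ` on `ℝ` has **no Cantor part** (w.r.t. `vol`): outside of a
countable set it vanishes on `vol`-negligible sets. -/
def NoCantorPart (vol : Measure ℝ) (μ : SignedMeasure ℝ) : Prop :=
  ∃ S : Set ℝ, S.Countable ∧
    ∀ A : Set ℝ, MeasurableSet A → A ∩ S = ∅ → vol A = 0 → μ A = 0

/-- A signed measure on `ℝ` is **purely Cantor**: nonzero, singular with respect to
Lebesgue measure, and without atoms (e.g. the derivative of the Cantor–Vitali
function). -/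
def PurelyCantorMeasure (μ : SignedMeasure ℝ) : Prop :=
  μ ≠ 0 ∧
  (∃ S : Set ℝ, MeasurableSet S ∧ volume S = 0 ∧
    ∀ A : Set ℝ, MeasurableSet A → A ∩ S = ∅ → μ A = 0) ∧
  ∀ x : ℝ, μ {x} = 0

/-- The flux of the 2×2 system `u_t = 0`, `v_t + ((1+u+v)v)_x = 0`. -/
def exFlux : ℝ × ℝ → ℝ × ℝ := fun p => (0, (1 + p.1 + p.2) * p.2)

/-- Two signed measures on `ℝ` agreeing on all intervals `Ioc a b` are equal. -/
lemma signed_ext_Ioc (μ ν : SignedMeasure ℝ)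
    (h : ∀ a b : ℝ, a ≤ b → μ (Ioc a b) = ν (Ioc a b)) : μ = ν := by
  set P1 : Measure ℝ := μ.toJordanDecomposition.posPart + ν.toJordanDecomposition.negPart with hP1
  set P2 : Measure ℝ := ν.toJordanDecomposition.posPart + μ.toJordanDecomposition.negPart with hP2
  have jd : ∀ (σ : SignedMeasure ℝ) (A : Set ℝ), MeasurableSet A →
      σ A = (σ.toJordanDecomposition.posPart A).toReal
        - (σ.toJordanDecomposition.negPart A).toReal := by
    intro σ A hA
    conv_lhs => rw [← σ.toSignedMeasure_toJordanDecomposition]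
    rw [JordanDecomposition.toSignedMeasure, VectorMeasure.sub_apply,
      Measure.toSignedMeasure_apply_measurable hA, Measure.toSignedMeasure_apply_measurable hA]
    rfl
  have key : ∀ A : Set ℝ, MeasurableSet A → (μ A = ν A ↔ P1 A = P2 A) := by
    intro A hA
    have fin1 : μ.toJordanDecomposition.posPart A ≠ ⊤ := measure_ne_top _ _
    have fin2 : μ.toJordanDecomposition.negPart A ≠ ⊤ := measure_ne_top _ _
    have fin3 : ν.toJordanDecomposition.posPart A ≠ ⊤ := measure_ne_top _ _
    have fin4 : ν.toJordanDecomposition.negPart A ≠ ⊤ := measure_ne_top _ _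
    have f1 : P1 A ≠ ⊤ := by
      rw [hP1, Measure.add_apply]; exact ENNReal.add_ne_top.2 ⟨fin1, fin4⟩
    have f2 : P2 A ≠ ⊤ := by
      rw [hP2, Measure.add_apply]; exact ENNReal.add_ne_top.2 ⟨fin3, fin2⟩
    rw [jd μ A hA, jd ν A hA, ← ENNReal.toReal_eq_toReal_iff' f1 f2,
      hP1, hP2, Measure.add_apply, Measure.add_apply,
      ENNReal.toReal_add fin1 fin4, ENNReal.toReal_add fin3 fin2]
    constructor <;> intro hx <;> linarith
  have hPP : P1 = P2 :=
    Measure.ext_of_Ioc P1 P2 fun a b hab =>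
      (key _ measurableSet_Ioc).1 (h a b hab.le)
  ext A hA
  exact (key A hA).2 (by rw [hPP])

/-- For fixed `x`, the integral over `t ∈ ℝ` of `∂_t φ (t,x)` vanishes when `φ` is `C¹`
with compact support. -/
lemma integral_slice_zero (φ : ℝ × ℝ → ℝ) (hφ : ContDiff ℝ 1 φ) (hc : HasCompactSupport φ)
    (x : ℝ) : (∫ t : ℝ, fderiv ℝ φ (t, x) (1, 0)) = 0 := by
  obtain ⟨R, hR⟩ := hc.isBounded.subset_closedBall (0 : ℝ × ℝ)
  set b : ℝ := |R| + 1 with hb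
  have hout : ∀ t : ℝ, b ≤ |t| → (t, x) ∉ tsupport φ := by
    intro t ht hmem
    have := hR hmem
    rw [Metric.mem_closedBall, dist_zero_right] at this
    have h1 : |t| ≤ ‖((t : ℝ), x)‖ := norm_fst_le ((t : ℝ), x)
    have : |t| ≤ R := h1.trans this
    have : R ≤ |R| := le_abs_self R
    linarith
  have hφout : ∀ t : ℝ, b ≤ |t| → φ (t, x) = 0 := fun t ht =>
    image_eq_zero_of_notMem_tsupport (hout t ht)
  have hdout : ∀ t : ℝ, b ≤ |t| → fderiv ℝ φ (t, x) = 0 := by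
    intro t ht
    exact fderiv_of_notMem_tsupport ℝ (hout t ht)
  have hd : ∀ t : ℝ, HasDerivAt (fun s : ℝ => φ (s, x)) (fderiv ℝ φ (t, x) (1, 0)) t := by
    intro t
    have h1 : HasDerivAt (fun s : ℝ => ((s : ℝ), x)) ((1 : ℝ), (0 : ℝ)) t :=
      (hasDerivAt_id t).prodMk (hasDerivAt_const t x)
    exact ((hφ.differentiable one_ne_zero (t, x)).hasFDerivAt).comp_hasDerivAt t h1
  have hcont : Continuous fun t : ℝ => fderiv ℝ φ (t, x) (1, 0) := by
    exact ((hφ.continuous_fderiv one_ne_zero).comp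
      (continuous_id.prodMk continuous_const)).clm_apply continuous_const
  have hstep1 : (∫ t : ℝ, fderiv ℝ φ (t, x) (1, 0))
      = ∫ t in Ioc (-b) b, fderiv ℝ φ (t, x) (1, 0) := by
    symm
    apply setIntegral_eq_integral_of_forall_compl_eq_zero
    intro t ht
    have hab : b ≤ |t| := by
      simp only [mem_Ioc, not_and_or, not_lt, not_le] at ht
      have h1 := le_abs_self t
      have h2 := neg_le_abs t
      rcases ht with h | h <;> linarith
    have := hdout t hab
    simp [this]
  have hbpos : (0 : ℝ) < b := by positivity
  have hstep2 : (∫ t in Ioc (-b) b, fderiv ℝ φ (t, x) (1, 0))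
      = ∫ t in (-b)..b, fderiv ℝ φ (t, x) (1, 0) :=
    (intervalIntegral.integral_of_le (by linarith)).symm
  have hstep3 : (∫ t in (-b)..b, fderiv ℝ φ (t, x) (1, 0)) = φ (b, x) - φ (-b, x) :=
    intervalIntegral.integral_eq_sub_of_hasDerivAt (fun t _ => hd t)
      (hcont.intervalIntegrable _ _)
  rw [hstep1, hstep2, hstep3, hφout b (by rw [abs_of_pos hbpos]),
    hφout (-b) (by rw [abs_neg, abs_of_pos hbpos]), sub_zero]


/-- **Sharpness example** (Remark 6.2): for the strictly hyperbolic 2×2 system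
`u_t = 0`, `v_t + ((1+u+v)v)_x = 0` the second characteristic speed is
`λ₂(u,v) = 1 + u + 2v` (with right eigenvector `(0,1)`). For the stationary solution
`u(t,x) = u₀(x)`, `v ≡ 0` with `Du₀` purely Cantor, the measure
`D_x λ₂ = D_x u + 2 D_x v = D_x u₀` is purely Cantor, while the second wave component
`(D_u λ₂ · r₂)(l₂ · (u,v)_x) = (2/(1+u+2v)) (v D_x u + (1+u+2v) D_x v) = 2 D_x v = 0`
has no Cantor part, in accordance with the general theorem. -/
theorem sharpness_example
    (u₀ : ℝ → ℝ) (hBV : BoundedVariationOn u₀ univ)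
    (hsmall : ∀ x, |u₀ x| < 1 / 4)
    (μ₀ : SignedMeasure ℝ)
    (hderiv : ∀ a b : ℝ, a ≤ b → μ₀ (Ioc a b) = u₀ b - u₀ a)
    (hCantor : PurelyCantorMeasure μ₀) :
    -- λ₂(u,v) = 1 + u + 2v : the Jacobian of the flux has eigenvector (0,1) with
    -- eigenvalue 1 + u + 2v, and the system is strictly hyperbolic near v = 0:
    (∀ p : ℝ × ℝ, fderiv ℝ exFlux p (0, 1) = (1 + p.1 + 2 * p.2) • ((0 : ℝ), (1 : ℝ))) ∧
    (∀ x : ℝ, (0 : ℝ) < 1 + u₀ x + 2 * 0) ∧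
    -- (u,v) = (u₀, 0) is a stationary distributional solution of the system:
    (∀ φ : ℝ × ℝ → ℝ, ContDiff ℝ 1 φ → HasCompactSupport φ →
      ((∫ p : ℝ × ℝ, u₀ p.2 * fderiv ℝ φ p (1, 0)) = 0 ∧
       (∫ p : ℝ × ℝ, ((0 : ℝ) * fderiv ℝ φ p (1, 0)
          + (1 + u₀ p.2 + (0 : ℝ)) * (0 : ℝ) * fderiv ℝ φ p (0, 1))) = 0)) ∧
    -- D_x λ₂(u,v) = D_x u₀ + 2 D_x v = D_x u₀ is purely Cantor:
    (∀ μlam : SignedMeasure ℝ,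
      (∀ a b : ℝ, a ≤ b →
        μlam (Ioc a b) = (1 + u₀ b + 2 * 0) - (1 + u₀ a + 2 * 0)) →
      PurelyCantorMeasure μlam) ∧
    -- while the second component `(D_u λ₂ · r₂)(l₂ · (u,v)_x) = 2 D_x v` vanishes,
    -- hence has no Cantor part:
    (∀ ν : SignedMeasure ℝ,
      (∀ a b : ℝ, a ≤ b → ν (Ioc a b) = 2 * ((0 : ℝ) - (0 : ℝ))) →
      ν = 0 ∧ NoCantorPart volume ν) := by
  -- measurability of u₀
  obtain ⟨pm, qm, hpm, hqm, hpq⟩ :=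
    hBV.locallyBoundedVariationOn.exists_monotoneOn_sub_monotoneOn
  have hu₀meas : Measurable u₀ := by
    rw [hpq]
    exact ((monotoneOn_univ.1 hpm).measurable).sub ((monotoneOn_univ.1 hqm).measurable)
  refine ⟨?_, ?_, ?_, ?_, ?_⟩
  · -- eigenvalue computation
    intro p
    have h1 : HasFDerivAt (fun q : ℝ × ℝ => (1 + q.1 + q.2) * q.2)
        ((1 + p.1 + p.2) • ContinuousLinearMap.snd ℝ ℝ ℝ +
          p.2 • (0 + ContinuousLinearMap.fst ℝ ℝ ℝ + ContinuousLinearMap.snd ℝ ℝ ℝ)) p :=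
      (((hasFDerivAt_const (1 : ℝ) p).add hasFDerivAt_fst).add hasFDerivAt_snd).mul
        hasFDerivAt_snd
    have h2 : HasFDerivAt exFlux
        ((0 : ℝ × ℝ →L[ℝ] ℝ).prod
          ((1 + p.1 + p.2) • ContinuousLinearMap.snd ℝ ℝ ℝ +
            p.2 • (0 + ContinuousLinearMap.fst ℝ ℝ ℝ + ContinuousLinearMap.snd ℝ ℝ ℝ))) p :=
      (hasFDerivAt_const (0 : ℝ) p).prodMk h1
    rw [h2.fderiv]
    simp only [ContinuousLinearMap.prod_apply, ContinuousLinearMap.add_apply,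
      ContinuousLinearMap.smul_apply, ContinuousLinearMap.coe_snd',
      ContinuousLinearMap.coe_fst', ContinuousLinearMap.zero_apply, smul_eq_mul,
      Prod.smul_mk, Prod.mk.injEq]
    norm_num
    ring
  · intro x
    have := (abs_lt.1 (hsmall x)).1
    linarith
  · intro φ hφ hc
    constructor
    · -- Fubini
      have hG : Continuous fun p : ℝ × ℝ => fderiv ℝ φ p (1, 0) :=
        (hφ.continuous_fderiv one_ne_zero).clm_apply continuous_const
      have hGsupp : HasCompactSupport fun p : ℝ × ℝ => fderiv ℝ φ p (1, 0) :=
        hc.fderiv_apply ℝ ((1 : ℝ), (0 : ℝ))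
      have hGint : Integrable (fun p : ℝ × ℝ => fderiv ℝ φ p (1, 0)) :=
        hG.integrable_of_hasCompactSupport hGsupp
      have hint : Integrable (fun p : ℝ × ℝ => u₀ p.2 * fderiv ℝ φ p (1, 0)) := by
        refine hGint.bdd_mul (c := 1 / 4) ?_ (ae_of_all _ fun p => (hsmall p.2).le)
        exact (hu₀meas.comp measurable_snd).aestronglyMeasurable
      rw [Measure.volume_eq_prod] at hint ⊢
      rw [integral_prod_symm _ hint]
      simp only
      have : ∀ x : ℝ, (∫ t : ℝ, u₀ x * fderiv ℝ φ (t, x) (1, 0)) = 0 := by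
        intro x
        rw [integral_const_mul, integral_slice_zero φ hφ hc x, mul_zero]
      simp only [this, integral_zero]
    · have : ∀ p : ℝ × ℝ, ((0 : ℝ) * fderiv ℝ φ p (1, 0)
          + (1 + u₀ p.2 + (0 : ℝ)) * (0 : ℝ) * fderiv ℝ φ p (0, 1)) = 0 := by
        intro p; ring
      simp only [this, integral_zero]
  · intro μlam hμlam
    have : μlam = μ₀ := by
      apply signed_ext_Ioc
      intro a b hab
      rw [hμlam a b hab, hderiv a b hab]
      ring
    rw [this]
    exact hCantor
  · intro ν hν
    have hν0 : ν = 0 := by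
      apply signed_ext_Ioc
      intro a b hab
      rw [hν a b hab]
      simp
    refine ⟨hν0, ∅, countable_empty, fun A _ _ _ => ?_⟩
    rw [hν0]
    simp


end
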